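/- The space ℛ^m of homogeneous regular polynomials of degree m in the free associative algebra on X₁,…,Xₙ over a field K of characteristic zero admits a basis consisting entirely of m-th powers of linear forms, i.e., elements fᵢ = (c₁ⁱX₁+⋯+cₙⁱXₙ)^m, 1 ≤ i ≤ C(n+m-1,m), with cⱼⁱ ∈ K; in particular ℛ^m has dimension C(n+m-1,m). -/

import Mathlib

open scoped BigOperators

noncomputable section

/-- The word `X₁^{α₁} ⋯ Xₙ^{αₙ}` as a list of generator indices. -/
def word (n : ℕ) (α : Fin n → ℕ) : List (Fin n) :=
  (List.finRange n).flatMap fun i => List.replicate (α i) i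

/-- The symmetrization `symz(X^(α)) = (1/m!) ∑_{σ ∈ Σₘ} X'_{σ(1)} ⋯ X'_{σ(m)}`
of the monomial `X^(α)` in the free associative algebra. -/
def symz (K : Type) [Field K] (n : ℕ) (α : Fin n → ℕ) : FreeAlgebra K (Fin n) :=
  ((Nat.factorial (word n α).length : K))⁻¹ •
    ∑ σ : Equiv.Perm (Fin (word n α).length),
      (List.ofFn fun j => FreeAlgebra.ι K ((word n α).get (σ j))).prod

/-- Regular homogeneous polynomials of degree `m`: the span of `m`-th powers of
linear forms in the generators. -/
def RegHom (K : Type) [Field K] (n m : ℕ) : Submodule K (FreeAlgebra K (Fin n)) :=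
  Submodule.span K {x | ∃ c : Fin n → K, x = (∑ i, c i • FreeAlgebra.ι K i) ^ m}

/-- Regular polynomials: the span of all powers of linear forms in the generators. -/
def Reg (K : Type) [Field K] (n : ℕ) : Submodule K (FreeAlgebra K (Fin n)) :=
  Submodule.span K {x | ∃ (m : ℕ) (c : Fin n → K), x = (∑ i, c i • FreeAlgebra.ι K i) ^ m}

/-- The symmetrization map `Φ` from commutative polynomials to the free algebra,
sending `x^(α)` to `symz(X^(α))` and extended linearly. -/
def Phi (K : Type) [Field K] (n : ℕ) (p : MvPolynomial (Fin n) K) : FreeAlgebra K (Fin n) :=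
  ∑ d ∈ p.support, p.coeff d • symz K n (fun i => d i)

namespace RegAux

variable (K : Type) [Field K] (n m : ℕ)

def lin (c : Fin n → K) : FreeAlgebra K (Fin n) := ∑ i, c i • FreeAlgebra.ι K i

def v (f : Fin m → Fin n) : FreeAlgebra K (Fin n) :=
  (List.ofFn fun j => FreeAlgebra.ι K (f j)).prod

def Dg (f : Fin m → Fin n) : Fin n → ℕ :=
  fun i => (Finset.univ.filter fun j => f j = i).card

lemma sum_Dg (f : Fin m → Fin n) : ∑ i, Dg n m f i = m := by
  classical
  have := Finset.card_eq_sum_card_fiberwise (f := f) (s := Finset.univ) (t := Finset.univ)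
    (fun j _ => Finset.mem_univ (f j))
  simpa [Dg] using this.symm

lemma expand (c : Fin n → K) :
    lin K n c ^ m = ∑ f : Fin m → Fin n, (∏ j, c (f j)) • v K n m f := by
  induction m with
  | zero => simp [v]
  | succ m ih =>
      rw [pow_succ', ih]
      rw [← Equiv.sum_comp (Fin.consEquiv fun _ : Fin (m+1) => Fin n)
            (fun g => (∏ j, c (g j)) • v K n (m+1) g)]
      rw [Fintype.sum_prod_type]
      rw [lin, Finset.sum_mul]
      refine Finset.sum_congr rfl fun i _ => ?_
      rw [Finset.mul_sum]
      refine Finset.sum_congr rfl fun f _ => ?_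
      have hv : v K n (m+1) (Fin.cons (α := fun _ => Fin n) i f)
          = FreeAlgebra.ι K i * v K n m f := by
        rw [v, v, List.ofFn_succ]
        simp [Fin.cons_succ]
      have hc : (∏ j, c (Fin.cons (α := fun _ => Fin n) i f j)) = c i * ∏ j, c (f j) := by
        simp [Fin.prod_univ_succ]
      show (c i • FreeAlgebra.ι K i) * ((∏ j, c (f j)) • v K n m f) = _
      have he : (Fin.consEquiv fun _ : Fin (m+1) => Fin n) (i, f)
          = Fin.cons (α := fun _ => Fin n) i f := rfl
      simp only [Fin.consEquiv_apply]
      rw [he, hc, hv, smul_mul_smul_comm]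

lemma prod_fiber {M : Type*} [CommMonoid M] (g : Fin n → M) (f : Fin m → Fin n) :
    ∏ j, g (f j) = ∏ i, g i ^ Dg n m f i := by
  classical
  rw [← Finset.prod_fiberwise_of_maps_to (g := f) (t := Finset.univ)
        (fun j _ => Finset.mem_univ (f j)) (fun j => g (f j))]
  refine Finset.prod_congr rfl fun i _ => ?_
  rw [Dg, Finset.prod_congr rfl (fun j hj => by
    rw [(Finset.mem_filter.mp hj).2]), Finset.prod_const]

def A : Finset (Fin n → ℕ) := Finset.Nat.antidiagonalTuple n m

def T (α : Fin n → ℕ) : FreeAlgebra K (Fin n) :=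
  ∑ f ∈ Finset.univ.filter (fun f : Fin m → Fin n => Dg n m f = α), v K n m f

lemma power_eq (c : Fin n → K) :
    lin K n c ^ m = ∑ α ∈ A n m, (∏ i, c i ^ α i) • T K n m α := by
  classical
  rw [expand]
  rw [← Finset.sum_fiberwise_of_maps_to (g := Dg n m) (t := A n m)
        (fun f _ => by simp [A, Finset.Nat.mem_antidiagonalTuple, sum_Dg])
        (fun f => (∏ j, c (f j)) • v K n m f)]
  refine Finset.sum_congr rfl fun α _ => ?_
  rw [T, Finset.smul_sum]
  refine Finset.sum_congr rfl fun f hf => ?_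
  rw [prod_fiber, (Finset.mem_filter.mp hf).2]

def psi : FreeAlgebra K (Fin n) →ₐ[K] MvPolynomial (Fin n) K :=
  FreeAlgebra.lift K MvPolynomial.X

lemma psi_v (f : Fin m → Fin n) :
    psi K n (v K n m f)
      = MvPolynomial.monomial (Finsupp.equivFunOnFinite.symm (Dg n m f)) 1 := by
  classical
  rw [v, map_list_prod, List.map_ofFn]
  have : ((List.ofFn ((psi K n) ∘ fun j => FreeAlgebra.ι K (f j))).prod)
      = ∏ j, MvPolynomial.X (f j) := by
    rw [List.prod_ofFn]
    simp [psi]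
  rw [this, prod_fiber n m (fun i => MvPolynomial.X i) f, MvPolynomial.monomial_eq]
  rw [Finsupp.prod_fintype]
  · simp
  · intro i; simp

lemma psi_T (α : Fin n → ℕ) :
    psi K n (T K n m α)
      = ((Finset.univ.filter fun f : Fin m → Fin n => Dg n m f = α).card : K) •
          MvPolynomial.monomial (Finsupp.equivFunOnFinite.symm α) 1 := by
  classical
  rw [T, map_sum]
  rw [Finset.sum_congr rfl (fun f hf => by
    rw [psi_v, (Finset.mem_filter.mp hf).2])]
  rw [Finset.sum_const, Nat.cast_smul_eq_nsmul K]

lemma card_filter_get {β : Type*} [DecidableEq β] (l : List β) (i : β) :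
    (Finset.univ.filter fun j : Fin l.length => l.get j = i).card = l.count i := by
  rw [Finset.card_filter]
  induction l with
  | nil => simp
  | cons a l ih =>
      simp only [List.length_cons]
      rw [Fin.sum_univ_succ]
      rw [List.count_cons]
      have h2 : (∑ j : Fin l.length, if (a :: l).get j.succ = i then 1 else 0)
          = List.count i l := by
        rw [← ih]
        exact Finset.sum_congr rfl fun j _ => rfl
      rw [h2]
      simp only [List.get_cons_zero]
      rw [add_comm]
      congr 1
      by_cases h : a = i
      · simp [h]
      · simp [h, Ne.symm h]

lemma length_word (α : Fin n → ℕ) : (word n α).length = ∑ i, α i := by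
  rw [word, List.length_flatMap, Fin.sum_univ_def]
  simp [Function.comp_def]

lemma count_word (α : Fin n → ℕ) (i : Fin n) : (word n α).count i = α i := by
  classical
  rw [word, List.count_flatMap, ← Fin.sum_univ_def]
  simp [List.count_replicate]

lemma exists_f (α : Fin n → ℕ) (hα : ∑ i, α i = m) :
    ∃ f : Fin m → Fin n, Dg n m f = α := by
  classical
  have hlen : (word n α).length = m := by rw [length_word, hα]
  refine ⟨fun j => (word n α).get (Fin.cast hlen.symm j), funext fun i => ?_⟩
  rw [Dg, Finset.card_filter]
  rw [← Equiv.sum_comp (finCongr hlen)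
        (fun j' : Fin m => if (word n α).get (Fin.cast hlen.symm j') = i then 1 else 0)]
  simp only [finCongr_apply]
  have : ∀ j : Fin (word n α).length,
      (Fin.cast hlen.symm (Fin.cast hlen j)) = j := fun j => rfl
  simp only [this]
  rw [← Finset.card_filter, card_filter_get, count_word]

variable [CharZero K]

lemma key {V : Type} [AddCommGroup V] [Module K V] (A' : Finset (Fin n → ℕ))
    (u : (Fin n → ℕ) → V)
    (h : ∀ c : Fin n → K, ∑ α ∈ A', (∏ i, c i ^ α i) • u α = 0) :
    ∀ α ∈ A', u α = 0 := by
  classical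
  intro α hα
  rw [← Module.forall_dual_apply_eq_zero_iff K]
  intro φ
  set P : MvPolynomial (Fin n) K :=
    ∑ β ∈ A', (MvPolynomial.monomial (Finsupp.equivFunOnFinite.symm β)) (φ (u β)) with hPdef
  have hP : P = 0 := by
    apply MvPolynomial.funext
    intro c
    rw [hPdef, map_sum, map_zero]
    have hterm : ∀ β ∈ A',
        (MvPolynomial.eval c) ((MvPolynomial.monomial (Finsupp.equivFunOnFinite.symm β)) (φ (u β)))
        = φ ((∏ i, c i ^ β i) • u β) := by
      intro β _
      rw [MvPolynomial.eval_monomial, Finsupp.prod_fintype]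
      · simp [mul_comm]
      · intro i; exact pow_zero _
    rw [Finset.sum_congr rfl hterm, ← map_sum, h c, map_zero]
  have h2 := congrArg (MvPolynomial.coeff (Finsupp.equivFunOnFinite.symm α)) hP
  rw [hPdef, MvPolynomial.coeff_sum, MvPolynomial.coeff_zero] at h2
  rw [Finset.sum_eq_single_of_mem α hα (fun β _ hne => by
    rw [MvPolynomial.coeff_monomial, if_neg]
    exact fun hc => hne (Finsupp.equivFunOnFinite.symm.injective hc))] at h2
  simpa [MvPolynomial.coeff_monomial] using h2

lemma Nb_pos (α : Fin n → ℕ) (hα : α ∈ A n m) :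
    0 < (Finset.univ.filter fun f : Fin m → Fin n => Dg n m f = α).card := by
  classical
  rw [Finset.card_pos]
  obtain ⟨f, hf⟩ := exists_f n m α (Finset.Nat.mem_antidiagonalTuple.mp hα)
  exact ⟨f, Finset.mem_filter.mpr ⟨Finset.mem_univ f, hf⟩⟩

lemma T_li : LinearIndependent K (fun α : ↥(A n m) => T K n m α) := by
  classical
  rw [Fintype.linearIndependent_iff]
  intro g hg α₀
  have h1 := congrArg (psi K n) hg
  rw [map_sum, map_zero] at h1
  simp only [map_smul, psi_T] at h1
  have h2 := congrArg (MvPolynomial.coeff (Finsupp.equivFunOnFinite.symm (α₀ : Fin n → ℕ))) h1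
  rw [MvPolynomial.coeff_sum, MvPolynomial.coeff_zero] at h2
  rw [Finset.sum_eq_single_of_mem α₀ (Finset.mem_univ α₀) (fun β _ hne => by
    rw [MvPolynomial.coeff_smul, MvPolynomial.coeff_smul, MvPolynomial.coeff_monomial, if_neg]
    · simp
    · exact fun hc => hne (Subtype.ext (Finsupp.equivFunOnFinite.symm.injective hc)))] at h2
  rw [MvPolynomial.coeff_smul, MvPolynomial.coeff_smul, MvPolynomial.coeff_monomial,
    if_pos rfl] at h2
  have hN : ((Finset.univ.filter fun f : Fin m → Fin n =>
      Dg n m f = (α₀ : Fin n → ℕ)).card : K) ≠ 0 := by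
    exact_mod_cast (Nb_pos n m α₀ α₀.2).ne'
  simpa [hN] using h2

lemma T_mem (α : Fin n → ℕ) (hα : α ∈ A n m) : T K n m α ∈ RegHom K n m := by
  have h : ∀ c : Fin n → K,
      ∑ β ∈ A n m, (∏ i, c i ^ β i) • (RegHom K n m).mkQ (T K n m β) = 0 := by
    intro c
    simp only [← map_smul, ← map_sum]
    rw [← power_eq, Submodule.mkQ_apply, Submodule.Quotient.mk_eq_zero]
    exact Submodule.subset_span ⟨c, rfl⟩
  have := key K n (A n m) _ h α hα
  rwa [Submodule.mkQ_apply, Submodule.Quotient.mk_eq_zero] at this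

lemma RegHom_eq :
    RegHom K n m = Submodule.span K (Set.range fun α : ↥(A n m) => T K n m α) := by
  apply le_antisymm
  · rw [RegHom, Submodule.span_le]
    rintro x ⟨c, rfl⟩
    show (lin K n c) ^ m ∈ _
    rw [power_eq]
    exact Submodule.sum_mem _ fun α hα => Submodule.smul_mem _ _
      (Submodule.subset_span ⟨⟨α, hα⟩, rfl⟩)
  · rw [Submodule.span_le]
    rintro x ⟨α, rfl⟩
    exact T_mem K n m α α.2

lemma card_A : (A n m).card = (n + m - 1).choose m := by
  classical
  rw [← Fintype.card_coe]
  have e : ↥(A n m) ≃ Sym (Fin n) m :=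
    { toFun := fun α => ⟨Finsupp.toMultiset (Finsupp.equivFunOnFinite.symm (α : Fin n → ℕ)), by
        rw [Finsupp.card_toMultiset, Finsupp.sum_fintype]
        · simpa using Finset.Nat.mem_antidiagonalTuple.mp α.2
        · intro i; rfl⟩
      invFun := fun s => ⟨fun i => Multiset.count i s.1, by
        simp only [A, Finset.Nat.mem_antidiagonalTuple]
        rw [Multiset.sum_count_eq_card (fun a _ => Finset.mem_univ a), s.2]⟩
      left_inv := fun α => Subtype.ext (funext fun i => by
        simp [Finsupp.count_toMultiset])
      right_inv := fun s => Subtype.ext (by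
        have : Finsupp.equivFunOnFinite.symm (fun i => Multiset.count i s.1)
            = Multiset.toFinsupp s.1 := by
          ext i
          simp [Multiset.toFinsupp_apply]
        simp only [this, Multiset.toFinsupp_toMultiset]) }
  rw [Fintype.card_congr e, Sym.card_sym_eq_choose, Fintype.card_fin]

end RegAux

theorem RegHom_basis_of_powers (K : Type) [Field K] [CharZero K] (n m : ℕ) :
    (∃ c : Fin ((n + m - 1).choose m) → Fin n → K,
        LinearIndependent K (fun i => (∑ j, c i j • FreeAlgebra.ι K j) ^ m) ∧
        Submodule.span K (Set.range fun i => (∑ j, c i j • FreeAlgebra.ι K j) ^ m)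
          = RegHom K n m) ∧
    Module.finrank K (RegHom K n m) = (n + m - 1).choose m := by
  classical
  set N := (n + m - 1).choose m with hN
  have hrank : Module.finrank K (RegHom K n m) = N := by
    rw [RegAux.RegHom_eq K n m, finrank_span_eq_card (RegAux.T_li K n m)]
    rw [Fintype.card_coe, RegAux.card_A n m, hN]
  refine ⟨?_, hrank⟩
  -- extract a basis of powers
  set s : Set (FreeAlgebra K (Fin n)) :=
    {x | ∃ c : Fin n → K, x = (∑ i, c i • FreeAlgebra.ι K i) ^ m} with hs
  have hspan : Submodule.span K s = RegHom K n m := rfl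
  have h0 : LinearIndepOn K id (∅ : Set (FreeAlgebra K (Fin n))) := linearIndepOn_empty K id
  set b := h0.extend (Set.empty_subset s) with hb
  have hbsub : b ⊆ s := h0.extend_subset _
  have hbspan : Submodule.span K b = RegHom K n m := by
    rw [h0.span_extend_eq_span, hspan]
  have hbli : LinearIndependent K ((↑) : b → FreeAlgebra K (Fin n)) :=
    h0.linearIndepOn_extend _
  -- b is finite
  have hTfin : (Set.range fun α : ↥(RegAux.A n m) => RegAux.T K n m α).Finite :=
    Set.finite_range _
  have hble : Submodule.span K b ≤
      Submodule.span K (Set.range fun α : ↥(RegAux.A n m) => RegAux.T K n m α) := by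
    rw [hbspan, RegAux.RegHom_eq K n m]
  have hbfin : b.Finite := by
    have hfw : Finite ↥(Set.range fun α : ↥(RegAux.A n m) => RegAux.T K n m α) :=
      hTfin.to_subtype
    have hr : Set.range ((↑) : b → FreeAlgebra K (Fin n)) ≤
        Submodule.span K (Set.range fun α : ↥(RegAux.A n m) => RegAux.T K n m α) := by
      rw [Subtype.range_coe]
      exact le_trans Submodule.subset_span hble
    have := LinearIndependent.finite_of_le_span_finite _ hbli _ hr
    exact b.toFinite
  letI : Fintype b := hbfin.fintype
  have hcard : Fintype.card b = N := by
    have h1 := finrank_span_set_eq_card (s := b) hbli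
    rw [hbspan, hrank, Set.toFinset_card] at h1
    exact h1.symm
  obtain e := Fintype.equivFinOfCardEq hcard
  have hc0 : ∀ i : Fin N, ((e.symm i : b) : FreeAlgebra K (Fin n)) ∈ s :=
    fun i => hbsub (e.symm i).2
  choose c hc using hc0
  have hFc : (fun i => (∑ j, c i j • FreeAlgebra.ι K j) ^ m)
      = (fun i : Fin N => ((e.symm i : b) : FreeAlgebra K (Fin n))) :=
    funext fun i => (hc i).symm
  refine ⟨c, ?_, ?_⟩
  · rw [hFc]
    exact hbli.comp e.symm e.symm.injective
  · rw [hFc]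
    have hr2 : Set.range (fun i : Fin N => ((e.symm i : b) : FreeAlgebra K (Fin n))) = b := by
      rw [show (fun i : Fin N => ((e.symm i : b) : FreeAlgebra K (Fin n)))
            = ((↑) : b → FreeAlgebra K (Fin n)) ∘ e.symm from rfl]
      rw [Set.range_comp, Equiv.range_eq_univ, Set.image_univ, Subtype.range_coe]
    rw [hr2, hbspan]

end
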